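/- Assume every request path in R is simple. Fix v ∈ V and i, i' ∈ C with i ≠ i', and let E_{vi}, E_{vi'} ∈ ℝ^{V×C} denote the corresponding standard basis matrices. Then for every Y ∈ ℝ^{V×C}, the function s ↦ F(Y + s·(E_{vi} − E_{vi'})) is an affine function of s ∈ ℝ. -/

import Mathlib

open Finset

/-- Expected caching gain `F(Y)` of the caching network model:
`F(Y) = ∑_{(i,p)∈R} λ_{(i,p)} ∑_{k=1}^{|p|−1} w(p_{k+1}, p_k)·(1 − ∏_{k'=1}^{k} (1 − y_{p_{k'} i}))`
(indices shifted to be 0-based). -/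
noncomputable def cachingGain {V C : Type*} [Fintype V] [Fintype C] [Inhabited V]
    (R : Finset (C × List V)) (lam : C × List V → ℝ) (w : V → V → ℝ)
    (Y : V → C → ℝ) : ℝ :=
  ∑ r ∈ R, lam r *
    ∑ k ∈ Finset.range (r.2.length - 1),
      w (r.2.getD (k + 1) default) (r.2.getD k default) *
        (1 - ∏ k' ∈ Finset.range (k + 1), (1 - Y (r.2.getD k' default) r.1))

/-- Concave relaxation `L(Y)`:
`L(Y) = ∑_{(i,p)∈R} λ_{(i,p)} ∑_{k=1}^{|p|−1} w(p_{k+1}, p_k)·min{1, ∑_{k'=1}^{k} y_{p_{k'} i}}`. -/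
noncomputable def relaxedGain {V C : Type*} [Fintype V] [Fintype C] [Inhabited V]
    (R : Finset (C × List V)) (lam : C × List V → ℝ) (w : V → V → ℝ)
    (Y : V → C → ℝ) : ℝ :=
  ∑ r ∈ R, lam r *
    ∑ k ∈ Finset.range (r.2.length - 1),
      w (r.2.getD (k + 1) default) (r.2.getD k default) *
        min 1 (∑ k' ∈ Finset.range (k + 1), Y (r.2.getD k' default) r.1)

/-- Membership in the relaxed constraint set `D2`. -/
def memD2 {V C : Type*} [Fintype C]
    (c : V → ℕ) (S : C → Finset V) (Y : V → C → ℝ) : Prop :=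
  (∀ v i, 0 ≤ Y v i ∧ Y v i ≤ 1) ∧
  (∀ v, ∑ i, Y v i = (c v : ℝ)) ∧
  (∀ i, ∀ v ∈ S i, Y v i = 1)

/-- A function is affine. -/
def AffFn (f : ℝ → ℝ) : Prop := ∃ a b : ℝ, ∀ s, f s = a * s + b

lemma affFn_cmul (c : ℝ) {f : ℝ → ℝ} (hf : AffFn f) : AffFn (fun s => c * f s) := by
  obtain ⟨a, b, h⟩ := hf
  exact ⟨c * a, c * b, fun s => by show c * f s = _; rw [h]; ring⟩

lemma affFn_one_sub {f : ℝ → ℝ} (hf : AffFn f) : AffFn (fun s => 1 - f s) := by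
  obtain ⟨a, b, h⟩ := hf
  exact ⟨-a, 1 - b, fun s => by show 1 - f s = _; rw [h]; ring⟩

lemma affFn_sum {ι : Type*} [DecidableEq ι] (T : Finset ι) (f : ι → ℝ → ℝ)
    (hf : ∀ r ∈ T, AffFn (f r)) : AffFn (fun s => ∑ r ∈ T, f r s) := by
  induction T using Finset.induction with
  | empty => exact ⟨0, 0, fun s => by simp⟩
  | insert _ _ hx ih =>
    obtain ⟨a, b, h1⟩ := hf _ (Finset.mem_insert_self _ _)
    obtain ⟨a2, b2, h2⟩ := ih (fun r hr => hf r (Finset.mem_insert_of_mem hr))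
    refine ⟨a + a2, b + b2, fun s => ?_⟩
    show ∑ r ∈ _, f r s = _
    rw [Finset.sum_insert hx, h1]
    have := h2 s
    simp only at this
    rw [this]; ring

lemma affFn_prod (T : Finset ℕ) (c e : ℕ → ℝ)
    (h : ∀ k1 ∈ T, ∀ k2 ∈ T, e k1 ≠ 0 → e k2 ≠ 0 → k1 = k2) :
    AffFn (fun s => ∏ k ∈ T, (c k + s * e k)) := by
  by_cases h0 : ∀ k ∈ T, e k = 0
  · refine ⟨0, ∏ k ∈ T, c k, fun s => ?_⟩
    show ∏ k ∈ T, (c k + s * e k) = _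
    rw [zero_mul, zero_add]
    exact Finset.prod_congr rfl fun k hk => by rw [h0 k hk, mul_zero, add_zero]
  · push_neg at h0
    obtain ⟨k0, hk0, he0⟩ := h0
    refine ⟨e k0 * ∏ k ∈ T.erase k0, c k, c k0 * ∏ k ∈ T.erase k0, c k, fun s => ?_⟩
    show ∏ k ∈ T, (c k + s * e k) = _
    rw [← Finset.mul_prod_erase T _ hk0]
    have hc : ∀ k ∈ T.erase k0, c k + s * e k = c k := by
      intro k hk
      have he : e k = 0 := by
        by_contra hne
        exact (Finset.mem_erase.mp hk).1 (h k (Finset.mem_erase.mp hk).2 k0 hk0 hne he0)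
      rw [he, mul_zero, add_zero]
    rw [Finset.prod_congr rfl hc]
    ring

/-- ε-convexity: if all request paths are simple then, for any node `v`
and distinct items `i ≠ i'`, the function `s ↦ F(Y + s·(E_{vi} − E_{vi'}))` is affine. -/
theorem stmt13 {V C : Type*} [Fintype V] [Fintype C] [Inhabited V]
    [DecidableEq V] [DecidableEq C]
    (R : Finset (C × List V)) (lam : C × List V → ℝ) (w : V → V → ℝ)
    (hpath : ∀ r ∈ R, r.2 ≠ []) (hlam : ∀ r ∈ R, 0 ≤ lam r) (hw : ∀ u v, 0 ≤ w u v)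
    (hsimple : ∀ r ∈ R, r.2.Nodup)
    (v : V) (i i' : C) (hii : i ≠ i') (Y : V → C → ℝ) :
    ∃ a b : ℝ, ∀ s : ℝ,
      cachingGain R lam w (fun u j => Y u j +
          s * ((if u = v ∧ j = i then 1 else 0) - (if u = v ∧ j = i' then 1 else 0)))
        = a * s + b := by
  suffices h : AffFn (fun s => cachingGain R lam w (fun u j => Y u j +
      s * ((if u = v ∧ j = i then 1 else 0) - (if u = v ∧ j = i' then 1 else 0)))) by
    obtain ⟨a, b, h⟩ := h
    exact ⟨a, b, h⟩
  unfold cachingGain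
  apply affFn_sum
  intro r hr
  apply affFn_cmul
  apply affFn_sum
  intro k hk
  apply affFn_cmul
  apply affFn_one_sub
  set p := r.2 with hp
  have hconv : ∀ s, (∏ k' ∈ Finset.range (k + 1),
      (1 - (Y (p.getD k' default) r.1 +
        s * ((if p.getD k' default = v ∧ r.1 = i then 1 else 0) -
             (if p.getD k' default = v ∧ r.1 = i' then 1 else 0)))))
      = ∏ k' ∈ Finset.range (k + 1),
        ((1 - Y (p.getD k' default) r.1) +
          s * (-((if p.getD k' default = v ∧ r.1 = i then 1 else 0) -
             (if p.getD k' default = v ∧ r.1 = i' then 1 else 0)))) := by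
    intro s
    exact Finset.prod_congr rfl fun k' _ => by ring
  have := affFn_prod (Finset.range (k + 1))
      (fun k' => 1 - Y (p.getD k' default) r.1)
      (fun k' => -((if p.getD k' default = v ∧ r.1 = i then 1 else 0) -
             (if p.getD k' default = v ∧ r.1 = i' then 1 else 0)))
      ?_
  · obtain ⟨a, b, hab⟩ := this
    refine ⟨a, b, fun s => ?_⟩
    show (∏ k' ∈ Finset.range (k + 1),
      (1 - (Y (p.getD k' default) r.1 +
        s * ((if p.getD k' default = v ∧ r.1 = i then 1 else 0) -
             (if p.getD k' default = v ∧ r.1 = i' then 1 else 0))))) = _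
    rw [hconv s]
    have := hab s
    simpa using this
  · intro k1 hk1 k2 hk2 he1 he2
    have hklen : ∀ m, m ∈ Finset.range (k + 1) → m < p.length := by
      intro m hm
      have hm' := Finset.mem_range.mp hm
      have hk' := Finset.mem_range.mp hk
      omega
    have hval : ∀ m, m ∈ Finset.range (k + 1) →
        -((if p.getD m default = v ∧ r.1 = i then (1:ℝ) else 0) -
          (if p.getD m default = v ∧ r.1 = i' then 1 else 0)) ≠ 0 →
        p.getD m default = v := by
      intro m _ hne
      by_contra hv
      apply hne
      rw [if_neg (fun h => hv h.1), if_neg (fun h => hv h.1)]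
      ring
    have h1 := hval k1 hk1 he1
    have h2 := hval k2 hk2 he2
    have hl1 := hklen k1 hk1
    have hl2 := hklen k2 hk2
    have hg1 : p.getD k1 default = p[k1] := List.getD_eq_getElem p default hl1
    have hg2 : p.getD k2 default = p[k2] := List.getD_eq_getElem p default hl2
    have : p[k1] = p[k2] := by rw [← hg1, ← hg2, h1, h2]
    exact ((hsimple r hr).getElem_inj_iff (hi := hl1) (hj := hl2)).mp this
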